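/- Let q*_α be the optimal q-function of the surrogate MDP M_α, satisfying q*_α(s,a) = r_α(s,a) + γ Σ_{s'} P_α(s'|s,a) max_{a'} q*_α(s',a'). Then q*_α(s,a) = (1-α) q^E(s,a) + f(s), where q^E is the expected α-optimal q-function (fixed point of T^{Eq}_α) and f(s) = α Σ_{a'} π₀(a'|s) q^E(s,a') depends only on the state. Consequently argmax_a q*_α(s,a) = argmax_a q^E(s,a) for every state s. -/
import Mathlib


open Finset

/-- One-step return for state `s`, action `a`, value `v`. -/
noncomputable def qOf {S A : Type*} [Fintype S] (γ : ℝ)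
    (r : S → A → ℝ) (P : S → A → S → ℝ) (v : S → ℝ) (s : S) (a : A) : ℝ :=
  r s a + γ * ∑ s', P s a s' * v s'

/-- Fixed-policy Bellman operator. -/
noncomputable def Tpol {S A : Type*} [Fintype S] [Fintype A] (γ : ℝ)
    (r : S → A → ℝ) (P : S → A → S → ℝ) (π : S → A → ℝ) (v : S → ℝ) : S → ℝ :=
  fun s => ∑ a, π s a * qOf γ r P v s a

/-- Optimal Bellman operator. -/
noncomputable def Topt {S A : Type*} [Fintype S] [Fintype A] (γ : ℝ)
    (r : S → A → ℝ) (P : S → A → S → ℝ) (v : S → ℝ) : S → ℝ :=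
  fun s => ⨆ a : A, qOf γ r P v s a
/-- The expected α-optimal Bellman q-operator `T^{Eq}_α`. -/
noncomputable def TEq {S A : Type*} [Fintype S] [Fintype A] (γ α : ℝ)
    (r : S → A → ℝ) (P : S → A → S → ℝ) (π0 : S → A → ℝ)
    (q : S → A → ℝ) : S → A → ℝ := fun s a =>
  r s a + γ * (1 - α) * ∑ s', P s a s' * (⨆ a' : A, q s' a')
        + γ * α * ∑ s', P s a s' * ∑ a', π0 s' a' * q s' a'

lemma fin_bdd {A : Type*} [Finite A] (f : A → ℝ) : BddAbove (Set.range f) :=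
  (Set.finite_range f).bddAbove

lemma ciSup_affine {A : Type*} [Fintype A] [Nonempty A] (f : A → ℝ) (k c : ℝ) (hk : 0 ≤ k) :
    (⨆ a, (k * f a + c)) = k * (⨆ a, f a) + c := by
  obtain ⟨a, ha⟩ := Finite.exists_max f
  have h1 : (⨆ b, f b) = f a := le_antisymm (ciSup_le ha) (le_ciSup (fin_bdd f) a)
  have h2 : (⨆ b, k * f b + c) = k * f a + c := by
    refine le_antisymm (ciSup_le fun b => ?_) (le_ciSup (fin_bdd (fun b => k * f b + c)) a)
    have := ha b; nlinarith
  rw [h1, h2]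

lemma ciSup_diff_le {A : Type*} [Fintype A] [Nonempty A] (f g : A → ℝ) (M : ℝ)
    (h : ∀ a, |f a - g a| ≤ M) :
    |(⨆ a, f a) - (⨆ a, g a)| ≤ M := by
  rw [abs_sub_le_iff]
  constructor
  · have : (⨆ a, f a) ≤ (⨆ a, g a) + M := ciSup_le fun a => by
      have h1 := (abs_le.mp (h a)).2
      have h2 := le_ciSup (fin_bdd g) a
      linarith
    linarith
  · have : (⨆ a, g a) ≤ (⨆ a, f a) + M := ciSup_le fun a => by
      have h1 := (abs_le.mp (h a)).1
      have h2 := le_ciSup (fin_bdd f) a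
      linarith
    linarith

/-- The optimal q-function `q*_α` of the surrogate MDP M_α and the
expected α-optimal q-function `q^E` (fixed point of `T^{Eq}_α`) are related by
`q*_α(s,a) = (1-α) q^E(s,a) + f(s)` with `f(s) = α Σ_{a'} π₀(a'|s) q^E(s,a')`;
consequently they have the same argmax sets in every state. -/
theorem surrogate_q_eq_expected_q_up_to_state_function
    {S A : Type*} [Fintype S] [Fintype A] [Nonempty S] [Nonempty A]
    (γ α : ℝ) (hγ0 : 0 ≤ γ) (hγ1 : γ < 1) (hα0 : 0 ≤ α) (hα1 : α < 1)
    (r : S → A → ℝ) (P : S → A → S → ℝ) (π0 : S → A → ℝ)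
    (hP : ∀ s a, (∀ s', 0 ≤ P s a s') ∧ ∑ s', P s a s' = 1)
    (hπ0 : ∀ s, (∀ a, 0 ≤ π0 s a) ∧ ∑ a, π0 s a = 1)
    (qα qE : S → A → ℝ)
    (hqα : ∀ s a, qα s a =
      ((1 - α) * r s a + α * ∑ b, π0 s b * r s b)
        + γ * ∑ s', ((1 - α) * P s a s' + α * ∑ b, π0 s b * P s b s')
            * (⨆ a' : A, qα s' a'))
    (hqE : TEq γ α r P π0 qE = qE) :
    (∀ s a, qα s a = (1 - α) * qE s a + α * ∑ a', π0 s a' * qE s a') ∧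
      ∀ s : S, {a : A | ∀ b, qα s b ≤ qα s a} = {a : A | ∀ b, qE s b ≤ qE s a} := by
  classical
  have h1α : (0:ℝ) < 1 - α := by linarith
  set g : S → A → ℝ := fun s a => (1 - α) * qE s a + α * ∑ a', π0 s a' * qE s a' with hgdef
  have hE : ∀ s a, qE s a = r s a + γ * (1 - α) * ∑ s', P s a s' * (⨆ a' : A, qE s' a')
      + γ * α * ∑ s', P s a s' * ∑ a', π0 s' a' * qE s' a' := by
    intro s a
    rw [← congrFun (congrFun hqE s) a]
    rfl
  have hsupg : ∀ s, (⨆ a : A, g s a)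
      = (1 - α) * (⨆ a : A, qE s a) + α * ∑ a', π0 s a' * qE s a' :=
    fun s => ciSup_affine (qE s) _ _ h1α.le
  -- g satisfies the same fixed-point equation as qα
  have key : ∀ s (c : A), r s c + γ * ∑ s', P s c s' * (⨆ a' : A, g s' a') = qE s c := by
    intro s c
    have h : ∑ s', P s c s' * (⨆ a' : A, g s' a')
        = (1-α) * ∑ s', P s c s' * (⨆ a' : A, qE s' a')
          + α * ∑ s', P s c s' * ∑ a', π0 s' a' * qE s' a' := by
      rw [Finset.mul_sum, Finset.mul_sum, ← Finset.sum_add_distrib]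
      refine Finset.sum_congr rfl fun s' _ => ?_
      rw [hsupg s']; ring
    rw [h, hE s c]; ring
  have hgeq : ∀ s a, g s a =
      ((1 - α) * r s a + α * ∑ b, π0 s b * r s b)
        + γ * ∑ s', ((1 - α) * P s a s' + α * ∑ b, π0 s b * P s b s')
            * (⨆ a' : A, g s' a') := by
    intro s a
    have expand : ∑ s', ((1 - α) * P s a s' + α * ∑ b, π0 s b * P s b s')
            * (⨆ a' : A, g s' a')
        = (1-α) * ∑ s', P s a s' * (⨆ a' : A, g s' a')
          + α * ∑ b, π0 s b * ∑ s', P s b s' * (⨆ a' : A, g s' a') := by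
      have hswap : ∑ b, π0 s b * ∑ s', P s b s' * (⨆ a' : A, g s' a')
          = ∑ s', ∑ b, π0 s b * (P s b s' * (⨆ a' : A, g s' a')) := by
        rw [Finset.sum_comm]
        exact Finset.sum_congr rfl fun b _ => Finset.mul_sum _ _ _
      rw [hswap, Finset.mul_sum, Finset.mul_sum, ← Finset.sum_add_distrib]
      refine Finset.sum_congr rfl fun s' _ => ?_
      rw [add_mul, Finset.mul_sum, Finset.sum_mul, Finset.mul_sum]
      congr 1
      · ring
      · exact Finset.sum_congr rfl fun b _ => by ring
    rw [expand]
    have h2 : α * ∑ b, π0 s b * (r s b + γ * ∑ s', P s b s' * (⨆ a' : A, g s' a'))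
        = α * ∑ b, π0 s b * r s b
          + γ * (α * ∑ b, π0 s b * ∑ s', P s b s' * (⨆ a' : A, g s' a')) := by
      rw [show ∑ b, π0 s b * (r s b + γ * ∑ s', P s b s' * (⨆ a' : A, g s' a'))
            = ∑ b, (π0 s b * r s b + γ * (π0 s b * ∑ s', P s b s' * (⨆ a' : A, g s' a')))
          from Finset.sum_congr rfl fun b _ => by ring,
        Finset.sum_add_distrib, ← Finset.mul_sum]
      ring
    have h3 : ∀ b, π0 s b * (r s b + γ * ∑ s', P s b s' * (⨆ a' : A, g s' a'))
        = π0 s b * qE s b := fun b => by rw [key s b]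
    simp only [h3] at h2
    have h4 : (1-α) * (r s a + γ * ∑ s', P s a s' * (⨆ a' : A, g s' a'))
        = (1-α) * qE s a := by rw [key s a]
    show (1 - α) * qE s a + α * ∑ a', π0 s a' * qE s a' = _
    rw [← h4]
    linarith [h2]
  -- uniqueness via contraction
  have hPα : ∀ s (a : A), (∀ s', 0 ≤ (1-α) * P s a s' + α * ∑ b, π0 s b * P s b s')
      ∧ ∑ s', ((1-α) * P s a s' + α * ∑ b, π0 s b * P s b s') = 1 := by
    intro s a
    constructor
    · intro s'
      have h1 := (hP s a).1 s'
      have h2 : 0 ≤ ∑ b, π0 s b * P s b s' :=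
        Finset.sum_nonneg fun b _ => mul_nonneg ((hπ0 s).1 b) ((hP s b).1 s')
      nlinarith
    · rw [Finset.sum_add_distrib, ← Finset.mul_sum, (hP s a).2, ← Finset.mul_sum,
        Finset.sum_comm]
      have h5 : ∑ b, ∑ s', π0 s b * P s b s' = 1 := by
        rw [show ∑ b, ∑ s', π0 s b * P s b s' = ∑ b, π0 s b * ∑ s', P s b s'
            from Finset.sum_congr rfl fun b _ => (Finset.mul_sum _ _ _).symm]
        simp_rw [fun b => (hP s b).2]
        simpa using (hπ0 s).2
      rw [h5]; ring
  have hd : ∀ s a, qα s a = g s a := by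
    set M : ℝ := ⨆ p : S × A, |qα p.1 p.2 - g p.1 p.2| with hMdef
    have hble : ∀ s a, |qα s a - g s a| ≤ M := fun s a =>
      le_ciSup (fin_bdd (fun p : S × A => |qα p.1 p.2 - g p.1 p.2|)) (s, a)
    have hM0 : 0 ≤ M :=
      le_trans (abs_nonneg _) (hble (Classical.arbitrary S) (Classical.arbitrary A))
    have hstep : ∀ s a, |qα s a - g s a| ≤ γ * M := by
      intro s a
      have hdiff : qα s a - g s a
          = γ * ∑ s', ((1-α) * P s a s' + α * ∑ b, π0 s b * P s b s')
              * ((⨆ a' : A, qα s' a') - (⨆ a' : A, g s' a')) := by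
        rw [hqα s a, hgeq s a,
          show ∑ s', ((1-α) * P s a s' + α * ∑ b, π0 s b * P s b s')
              * ((⨆ a' : A, qα s' a') - (⨆ a' : A, g s' a'))
            = ∑ s', (((1-α) * P s a s' + α * ∑ b, π0 s b * P s b s') * (⨆ a' : A, qα s' a')
              - ((1-α) * P s a s' + α * ∑ b, π0 s b * P s b s') * (⨆ a' : A, g s' a'))
            from Finset.sum_congr rfl fun s' _ => by ring,
          Finset.sum_sub_distrib]
        ring
      rw [hdiff, abs_mul, abs_of_nonneg hγ0]
      have hbound : |∑ s', ((1-α) * P s a s' + α * ∑ b, π0 s b * P s b s')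
              * ((⨆ a' : A, qα s' a') - (⨆ a' : A, g s' a'))| ≤ M := by
        calc |∑ s', ((1-α) * P s a s' + α * ∑ b, π0 s b * P s b s')
              * ((⨆ a' : A, qα s' a') - (⨆ a' : A, g s' a'))|
            ≤ ∑ s', |((1-α) * P s a s' + α * ∑ b, π0 s b * P s b s')
              * ((⨆ a' : A, qα s' a') - (⨆ a' : A, g s' a'))| :=
              Finset.abs_sum_le_sum_abs _ _
          _ ≤ ∑ s', ((1-α) * P s a s' + α * ∑ b, π0 s b * P s b s') * M := by
              refine Finset.sum_le_sum fun s' _ => ?_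
              rw [abs_mul, abs_of_nonneg ((hPα s a).1 s')]
              exact mul_le_mul_of_nonneg_left
                (ciSup_diff_le _ _ _ (fun a' => hble s' a')) ((hPα s a).1 s')
          _ = M := by rw [← Finset.sum_mul, (hPα s a).2, one_mul]
      exact mul_le_mul_of_nonneg_left hbound hγ0
    have hMle : M ≤ γ * M := ciSup_le fun p => hstep p.1 p.2
    have hM : M = 0 := by nlinarith
    intro s a
    have h0 := hble s a
    rw [hM] at h0
    have := abs_nonpos_iff.mp h0
    linarith
  refine ⟨hd, fun s => ?_⟩
  ext a
  simp only [Set.mem_setOf_eq]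
  constructor
  · intro h b
    have hb := h b
    rw [hd s b, hd s a] at hb
    simp only [hgdef] at hb
    nlinarith
  · intro h b
    have hb := h b
    rw [hd s b, hd s a]
    simp only [hgdef]
    nlinarith
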